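/- Let 1 < p < ∞, ω ∈ L¹(ℝ²) ∩ L^p(ℝ²), and f ∈ C²(ℝ) with f' and f'' bounded. For v ∈ L^p(ℝ²), define the linear operator D(v) ∈ ℒ(L^p(ℝ²)) by (D(v)h)(x) = ∫_{ℝ²} ω(x−y) f'(v(y)) h(y) dy. Then the map v ↦ D(v) is continuous from L^p(ℝ²) to ℒ(L^p(ℝ²)): if v_n → v in L^p then ‖D(v_n) − D(v)‖_{ℒ(L^p)} → 0. -/

import Mathlib

open MeasureTheory Filter
open scoped ENNReal Topology

noncomputable section

local notation "G2" => EuclideanSpace ℝ (Fin 2)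



lemma youngA {r r' : ℝ} (hrr : r.HolderConjugate r') (K g : G2 → ℝ≥0∞)
    (hK : Measurable K) (hg : Measurable g) :
    ∫⁻ x, (∫⁻ y, K (x - y) * g y) ^ r ≤ (∫⁻ z, K z) ^ r * ∫⁻ y, g y ^ r := by
  have hr0 : (0:ℝ) < r := hrr.pos
  have hr'0 : (0:ℝ) < r' := hrr.symm.pos
  have hKxy : ∀ x : G2, Measurable fun y : G2 => K (x - y) :=
    fun x => hK.comp (measurable_const.sub measurable_id)
  have hsub : ∀ x : G2, ∫⁻ y, K (x - y) = ∫⁻ z, K z := fun x =>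
    (Measure.measurePreserving_sub_left volume x).lintegral_comp hK
  have inner : ∀ x : G2, (∫⁻ y, K (x - y) * g y)
      ≤ (∫⁻ z, K z) ^ (1/r') * (∫⁻ y, K (x - y) * g y ^ r) ^ (1/r) := by
    intro x
    have e1 : ∀ y : G2, K (x - y) * g y
        = (K (x - y)) ^ (1/r') * ((K (x - y)) ^ (1/r) * g y) := by
      intro y
      rw [← mul_assoc, ← ENNReal.rpow_add_of_nonneg _ _ (by positivity) (by positivity)]
      rw [show 1/r' + 1/r = 1 from by
        rw [add_comm]; simpa [one_div] using hrr.inv_add_inv_eq_one]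
      rw [ENNReal.rpow_one]
    calc ∫⁻ y, K (x - y) * g y
        = ∫⁻ y, (K (x - y)) ^ (1/r') * ((K (x - y)) ^ (1/r) * g y) := by simp_rw [e1]
      _ ≤ (∫⁻ y, ((K (x - y)) ^ (1/r')) ^ r') ^ (1/r')
            * (∫⁻ y, ((K (x - y)) ^ (1/r) * g y) ^ r) ^ (1/r) :=
          ENNReal.lintegral_mul_le_Lp_mul_Lq volume hrr.symm
            ((hKxy x).pow_const _).aemeasurable
            (((hKxy x).pow_const _).mul hg).aemeasurable
      _ = (∫⁻ z, K z) ^ (1/r') * (∫⁻ y, K (x - y) * g y ^ r) ^ (1/r) := by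
          congr 1
          · rw [← hsub x]
            congr 1
            refine lintegral_congr fun y => ?_
            rw [← ENNReal.rpow_mul, one_div, inv_mul_cancel₀ hr'0.ne', ENNReal.rpow_one]
          · congr 1
            refine lintegral_congr fun y => ?_
            rw [ENNReal.mul_rpow_of_nonneg _ _ hr0.le, ← ENNReal.rpow_mul,
              one_div, inv_mul_cancel₀ hr0.ne', ENNReal.rpow_one]
  have step2 : ∀ x : G2, (∫⁻ y, K (x - y) * g y) ^ r
      ≤ (∫⁻ z, K z) ^ (r/r') * ∫⁻ y, K (x - y) * g y ^ r := by
    intro x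
    calc (∫⁻ y, K (x - y) * g y) ^ r
        ≤ ((∫⁻ z, K z) ^ (1/r') * (∫⁻ y, K (x - y) * g y ^ r) ^ (1/r)) ^ r :=
          ENNReal.rpow_le_rpow (inner x) hr0.le
      _ = (∫⁻ z, K z) ^ (r/r') * ∫⁻ y, K (x - y) * g y ^ r := by
          rw [ENNReal.mul_rpow_of_nonneg _ _ hr0.le, ← ENNReal.rpow_mul,
            ← ENNReal.rpow_mul, one_div, one_div]
          rw [inv_mul_cancel₀ hr0.ne', ENNReal.rpow_one, inv_mul_eq_div]
  have hprod : Measurable fun q : G2 × G2 => K (q.1 - q.2) * g q.2 ^ r :=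
    (hK.comp (measurable_fst.sub measurable_snd)).mul
      ((hg.comp measurable_snd).pow_const _)
  calc ∫⁻ x, (∫⁻ y, K (x - y) * g y) ^ r
      ≤ ∫⁻ x, (∫⁻ z, K z) ^ (r/r') * ∫⁻ y, K (x - y) * g y ^ r :=
        lintegral_mono step2
    _ = (∫⁻ z, K z) ^ (r/r') * ∫⁻ x, ∫⁻ y, K (x - y) * g y ^ r := by
        rw [lintegral_const_mul'']
        exact (Measurable.lintegral_prod_right (f := fun x y => K (x - y) * g y ^ r)
          hprod).aemeasurable
    _ = (∫⁻ z, K z) ^ (r/r') * ∫⁻ y, ∫⁻ x, K (x - y) * g y ^ r := by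
        rw [lintegral_lintegral_swap hprod.aemeasurable]
    _ = (∫⁻ z, K z) ^ (r/r') * ((∫⁻ z, K z) * ∫⁻ y, g y ^ r) := by
        congr 1
        calc ∫⁻ y, ∫⁻ x, K (x - y) * g y ^ r
            = ∫⁻ y, (∫⁻ x, K (x - y)) * g y ^ r := by
              refine lintegral_congr fun y => ?_
              have hm : Measurable fun x : G2 => K (x - y) := hK.comp (measurable_sub_const y)
              rw [lintegral_mul_const'' _ hm.aemeasurable]
          _ = ∫⁻ y, (∫⁻ z, K z) * g y ^ r := by
              refine lintegral_congr fun y => ?_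
              rw [lintegral_sub_right_eq_self K y]
          _ = (∫⁻ z, K z) * ∫⁻ y, g y ^ r := lintegral_const_mul'' _ (hg.pow_const _).aemeasurable
    _ = (∫⁻ z, K z) ^ r * ∫⁻ y, g y ^ r := by
        rw [← mul_assoc]
        congr 1
        have h2 : r'⁻¹ = 1 - r⁻¹ := by
          have := hrr.inv_add_inv_eq_one; linarith
        have h1 : r / r' = r - 1 := by
          rw [div_eq_mul_inv, h2, mul_sub, mul_inv_cancel₀ hr0.ne', mul_one]
        calc (∫⁻ z, K z) ^ (r/r') * (∫⁻ z, K z)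
            = (∫⁻ z, K z) ^ (r-1) * (∫⁻ z, K z) ^ (1:ℝ) := by rw [h1, ENNReal.rpow_one]
          _ = (∫⁻ z, K z) ^ r := by
              rw [← ENNReal.rpow_add_of_nonneg _ _ (by linarith [hrr.lt]) zero_le_one]
              norm_num

lemma youngB {r r' : ℝ} (hrr : r.HolderConjugate r') (K g : G2 → ℝ≥0∞)
    (hK : Measurable K) (hg : Measurable g) :
    ∫⁻ x, (∫⁻ y, K (x - y) * g y) ^ r ≤ (∫⁻ z, K z ^ r) * (∫⁻ y, g y) ^ r := by
  have hswap : ∀ x : G2, ∫⁻ y, K (x - y) * g y = ∫⁻ y, g (x - y) * K y := by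
    intro x
    have hm : Measurable fun y : G2 => g (x - y) * K y :=
      (hg.comp (measurable_const.sub measurable_id)).mul hK
    rw [← (Measure.measurePreserving_sub_left volume x).lintegral_comp hm]
    refine lintegral_congr fun y => ?_
    simp only [sub_sub_cancel]
    exact mul_comm _ _
  simp_rw [hswap]
  simpa [mul_comm] using youngA hrr g K hg hK


/-- Continuity of `v ↦ D(v)` in operator norm, where
`(D(v)h)(x) = ∫ ω(x−y) f'(v(y)) h(y) dy`: if `v_n → v` in `L^p(ℝ²)` (`1 < p < ∞`,
`ω ∈ L¹ ∩ L^p`, `f ∈ C²` with bounded `f'`, `f''`), then `‖D(v_n) − D(v)‖_{ℒ(L^p)} → 0`,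
expressed as: for every `ε > 0`, eventually in `n`, `‖(D(v_n) − D(v))h‖_p ≤ ε‖h‖_p`
for all `h ∈ L^p`. -/
theorem derivative_operator_continuous
    (p : ℝ≥0∞) (hp1 : 1 < p) (hptop : p ≠ ⊤)
    (ω : EuclideanSpace ℝ (Fin 2) → ℝ) (hω1 : Integrable ω) (hωp : MemLp ω p volume)
    (f : ℝ → ℝ) (hf : ContDiff ℝ 2 f)
    (hf' : ∃ C, ∀ s, |deriv f s| ≤ C) (hf'' : ∃ C, ∀ s, |deriv (deriv f) s| ≤ C)
    (vn : ℕ → EuclideanSpace ℝ (Fin 2) → ℝ) (hvn : ∀ n, MemLp (vn n) p volume)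
    (v : EuclideanSpace ℝ (Fin 2) → ℝ) (hv : MemLp v p volume)
    (hconv : Tendsto (fun n => eLpNorm (vn n - v) p volume) atTop (𝓝 0)) :
    ∀ ε : ℝ, 0 < ε → ∃ N : ℕ, ∀ n ≥ N,
      ∀ h : EuclideanSpace ℝ (Fin 2) → ℝ, MemLp h p volume →
        eLpNorm (fun x => ∫ y, ω (x - y) * (deriv f (vn n y) - deriv f (v y)) * h y)
            p volume
          ≤ ENNReal.ofReal ε * eLpNorm h p volume := by
  intro ε hε
  obtain ⟨C₁, hC₁⟩ := hf'
  obtain ⟨C₂, hC₂⟩ := hf''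
  have hC₁0 : 0 ≤ C₁ := (abs_nonneg _).trans (hC₁ 0)
  -- derivative facts
  have hfd := contDiff_succ_iff_deriv.mp (show ContDiff ℝ (1 + 1) f by
    have h11 : ((1:WithTop ℕ∞) + 1) = 2 := by norm_num
    rw [h11]; exact hf)
  have hdf1 : ContDiff ℝ 1 (deriv f) := hfd.2.2
  have hdc : Continuous (deriv f) := hdf1.continuous
  have hdd : Differentiable ℝ (deriv f) := hdf1.differentiable one_ne_zero
  set L : ℝ := (C₂.toNNReal : ℝ) with hL
  have hL0 : 0 ≤ L := NNReal.coe_nonneg _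
  have hlip : LipschitzWith C₂.toNNReal (deriv f) := by
    refine lipschitzWith_of_nnnorm_deriv_le hdd fun x => ?_
    rw [← NNReal.coe_le_coe]
    simp only [coe_nnnorm, Real.norm_eq_abs, Real.coe_toNNReal']
    exact (hC₂ x).trans (le_max_left _ _)
  have hlip' : ∀ a b : ℝ, |deriv f a - deriv f b| ≤ L * |a - b| := by
    intro a b
    have := hlip.dist_le_mul a b
    rwa [Real.dist_eq, Real.dist_eq] at this
  -- exponents
  have hp0 : p ≠ 0 := (zero_lt_one.trans hp1).ne'
  set r : ℝ := p.toReal with hr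
  have hr1 : 1 < r := by
    rw [hr, ← ENNReal.toReal_one]
    exact (ENNReal.toReal_lt_toReal ENNReal.one_ne_top hptop).mpr hp1
  have hr0 : (0:ℝ) < r := by linarith
  set r' : ℝ := Real.conjExponent r with hr'
  have hconj : r.HolderConjugate r' := Real.HolderConjugate.conjExponent hr1
  have hr'0 : (0:ℝ) < r' := hconj.symm.pos
  -- constants
  set I1 : ℝ≥0∞ := ∫⁻ z, (‖ω z‖₊ : ℝ≥0∞) with hI1def
  have hI1top : I1 ≠ ∞ := hω1.2.ne
  set Wp : ℝ≥0∞ := eLpNorm ω p volume with hWpdef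
  have hWptop : Wp ≠ ∞ := hωp.2.ne
  set A : ℝ≥0∞ := Wp * ENNReal.ofReal (2 * C₁) with hAdef
  have hAtop : A ≠ ∞ := ENNReal.mul_ne_top hWptop ENNReal.ofReal_ne_top
  set δ : ℝ := (ε/2) / ((I1.toReal + 1) * (L + 1)) with hδdef
  have hI1R : (0:ℝ) < I1.toReal + 1 := by positivity
  have hδ : 0 < δ := by
    apply div_pos (by linarith) (by positivity)
  set c : ℝ≥0∞ := ENNReal.ofReal δ with hcdef
  have hc0 : c ≠ 0 := (ENNReal.ofReal_pos.mpr hδ).ne'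
  -- the small-set coefficient function
  set Ψ : ℝ≥0∞ → ℝ≥0∞ := fun t => A * (c⁻¹ ^ r * t ^ r) ^ (1/r') with hΨdef
  have hΨtend : Tendsto Ψ (𝓝 0) (𝓝 0) := by
    have t1 : Tendsto (fun t : ℝ≥0∞ => t ^ r) (𝓝 0) (𝓝 0) := by
      have := ENNReal.continuous_rpow_const (y := r).tendsto 0
      rwa [ENNReal.zero_rpow_of_pos hr0] at this
    have t2 : Tendsto (fun t : ℝ≥0∞ => c⁻¹ ^ r * t ^ r) (𝓝 0) (𝓝 0) := by
      have := ENNReal.Tendsto.const_mul (a := c⁻¹ ^ r) t1 (Or.inr ?_)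
      · simpa using this
      · exact ENNReal.rpow_ne_top_of_nonneg hr0.le (by simp [hc0])
    have t3 : Tendsto (fun t : ℝ≥0∞ => (c⁻¹ ^ r * t ^ r) ^ (1/r')) (𝓝 0) (𝓝 0) := by
      have h0 : ((0:ℝ≥0∞)) ^ (1/r') = 0 := ENNReal.zero_rpow_of_pos (by positivity)
      have := (ENNReal.continuous_rpow_const (y := 1/r')).tendsto 0
      rw [h0] at this
      exact this.comp t2
    have t4 := ENNReal.Tendsto.const_mul (a := A) t3 (Or.inr hAtop)
    rw [mul_zero] at t4
    exact t4
  have hev : ∀ᶠ n in atTop, Ψ (eLpNorm (vn n - v) p volume) < ENNReal.ofReal (ε/2) :=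
    (hΨtend.comp hconv).eventually_lt_const (by simp [ENNReal.ofReal_pos]; linarith)
  obtain ⟨N, hN⟩ := eventually_atTop.mp hev
  refine ⟨N, fun n hn h hh => ?_⟩
  -- measurable representatives
  set u₀ := (hvn n).1.mk (vn n) with hu₀def
  have hu₀m : Measurable u₀ := (hvn n).1.stronglyMeasurable_mk.measurable
  have hu₀ae : vn n =ᵐ[volume] u₀ := (hvn n).1.ae_eq_mk
  set v₀ := hv.1.mk v with hv₀def
  have hv₀m : Measurable v₀ := hv.1.stronglyMeasurable_mk.measurable
  have hv₀ae : v =ᵐ[volume] v₀ := hv.1.ae_eq_mk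
  set h₀ := hh.1.mk h with hh₀def
  have hh₀m : Measurable h₀ := hh.1.stronglyMeasurable_mk.measurable
  have hh₀ae : h =ᵐ[volume] h₀ := hh.1.ae_eq_mk
  set ω₀ := hω1.1.mk ω with hω₀def
  have hω₀m : Measurable ω₀ := hω1.1.stronglyMeasurable_mk.measurable
  have hωae : ω =ᵐ[volume] ω₀ := hω1.1.ae_eq_mk
  set m₀ : EuclideanSpace ℝ (Fin 2) → ℝ := fun y => deriv f (u₀ y) - deriv f (v₀ y)
    with hm₀def
  have hm₀m : Measurable m₀ := (hdc.measurable.comp hu₀m).sub (hdc.measurable.comp hv₀m)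
  set w₀ : EuclideanSpace ℝ (Fin 2) → ℝ := fun y => u₀ y - v₀ y with hw₀def
  have hw₀m : Measurable w₀ := hu₀m.sub hv₀m
  have hw₀ae : (vn n - v) =ᵐ[volume] w₀ := hu₀ae.sub hv₀ae
  have hm₀b : ∀ y, |m₀ y| ≤ 2 * C₁ := by
    intro y
    calc |m₀ y| ≤ |deriv f (u₀ y)| + |deriv f (v₀ y)| := abs_sub _ _
      _ ≤ 2 * C₁ := by linarith [hC₁ (u₀ y), hC₁ (v₀ y)]
  have hm₀lip : ∀ y, |m₀ y| ≤ L * |w₀ y| := fun y => hlip' _ _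
  set E : Set (EuclideanSpace ℝ (Fin 2)) := {y | c ≤ (‖w₀ y‖₊ : ℝ≥0∞)} with hEdef
  have hEm : MeasurableSet E := measurableSet_le measurable_const hw₀m.enorm
  -- replace the integrand by measurable representatives
  have hωpre : ∀ x : EuclideanSpace ℝ (Fin 2),
      (fun y => ω (x - y)) =ᵐ[volume] fun y => ω₀ (x - y) := by
    intro x
    have hq := (Measure.measurePreserving_sub_left
      (volume : Measure (EuclideanSpace ℝ (Fin 2))) x).quasiMeasurePreserving
    rw [Filter.EventuallyEq, ae_iff] at hωae ⊢
    exact hq.preimage_null hωae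
  have hFF : (fun x => ∫ y, ω (x - y) * (deriv f (vn n y) - deriv f (v y)) * h y)
      = fun x => ∫ y, ω₀ (x - y) * m₀ y * h₀ y := by
    funext x
    refine integral_congr_ae ?_
    filter_upwards [hωpre x, hu₀ae, hv₀ae, hh₀ae] with y e1 e2 e3 e4
    rw [e1, e2, e3, e4]
  -- ENNReal-valued data
  set K : EuclideanSpace ℝ (Fin 2) → ℝ≥0∞ := fun z => (‖ω₀ z‖₊ : ℝ≥0∞) with hKdef
  have hKm : Measurable K := hω₀m.enorm
  set Hf : EuclideanSpace ℝ (Fin 2) → ℝ≥0∞ := fun y => (‖h₀ y‖₊ : ℝ≥0∞) with hHdef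
  have hHm : Measurable Hf := hh₀m.enorm
  set Gf : EuclideanSpace ℝ (Fin 2) → ℝ≥0∞ := fun y => (‖m₀ y‖₊ : ℝ≥0∞) * Hf y with hGdef
  have hGm : Measurable Gf := hm₀m.enorm.mul hHm
  set G1 := E.indicator Gf with hG1def
  have hG1m : Measurable G1 := hGm.indicator hEm
  set G2f := Eᶜ.indicator Gf with hG2def
  have hG2m : Measurable G2f := hGm.indicator hEm.compl
  set Hp := eLpNorm h p volume with hHpdef
  have hHp : (∫⁻ y, Hf y ^ r) ^ (1/r) = Hp := by
    rw [hHpdef, show eLpNorm h p volume = eLpNorm h₀ p volume from eLpNorm_congr_ae hh₀ae,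
      eLpNorm_eq_lintegral_rpow_enorm_toReal hp0 hptop, ← hr]
    rfl
  set Wn := eLpNorm (vn n - v) p volume with hWndef
  have hWn : eLpNorm w₀ p volume = Wn := eLpNorm_congr_ae hw₀ae.symm
  -- Chebyshev
  have hμE : volume E ≤ c⁻¹ ^ r * Wn ^ r := by
    have hch := meas_ge_le_mul_pow_eLpNorm_enorm (μ := volume) hp0 hptop
      hw₀m.aestronglyMeasurable (ε := c) hc0 (fun hc => absurd hc ENNReal.ofReal_ne_top)
    rw [hWn, ← hr] at hch
    exact hch
  -- bound for the large-set part
  set χ : EuclideanSpace ℝ (Fin 2) → ℝ≥0∞ := E.indicator (fun _ => 1) with hχdef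
  have hχm : Measurable χ := measurable_const.indicator hEm
  have hG1le : ∀ y, G1 y ≤ ENNReal.ofReal (2*C₁) * (χ y * Hf y) := by
    intro y
    by_cases hy : y ∈ E
    · simp only [hG1def, hχdef, Set.indicator_of_mem hy, one_mul]
      refine mul_le_mul_left ?_ _
      rw [← enorm_eq_nnnorm, Real.enorm_eq_ofReal_abs]
      exact ENNReal.ofReal_le_ofReal (hm₀b y)
    · simp [hG1def, hχdef, Set.indicator_of_notMem hy]
  have hχpow : ∫⁻ y, χ y ^ r' = volume E := by
    rw [← lintegral_indicator_one hEm]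
    refine lintegral_congr fun y => ?_
    by_cases hy : y ∈ E <;>
      simp [hχdef, Set.indicator_of_mem, Set.indicator_of_notMem, hy,
        ENNReal.zero_rpow_of_pos hr'0]
  have hG1int : ∫⁻ y, G1 y ≤ ENNReal.ofReal (2*C₁) * ((volume E) ^ (1/r') * Hp) := by
    calc ∫⁻ y, G1 y ≤ ∫⁻ y, ENNReal.ofReal (2*C₁) * (χ y * Hf y) := lintegral_mono hG1le
      _ = ENNReal.ofReal (2*C₁) * ∫⁻ y, χ y * Hf y :=
          lintegral_const_mul' _ _ ENNReal.ofReal_ne_top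
      _ ≤ ENNReal.ofReal (2*C₁) * ((∫⁻ y, χ y ^ r') ^ (1/r') * (∫⁻ y, Hf y ^ r) ^ (1/r)) := by
          gcongr
          exact ENNReal.lintegral_mul_le_Lp_mul_Lq volume hconj.symm hχm.aemeasurable
            hHm.aemeasurable
      _ = ENNReal.ofReal (2*C₁) * ((volume E) ^ (1/r') * Hp) := by rw [hχpow, hHp]
  -- bound for the small-sup part
  have hG2le : ∀ y, G2f y ≤ ENNReal.ofReal (L*δ) * Hf y := by
    intro y
    by_cases hy : y ∈ E
    · have : y ∉ Eᶜ := by simpa using hy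
      simp [hG2def, Set.indicator_of_notMem this]
    · simp only [hG2def, Set.indicator_of_mem (Set.mem_compl hy)]
      refine mul_le_mul_left ?_ _
      have habs : |w₀ y| ≤ δ := by
        by_contra hcon
        push_neg at hcon
        refine hy ?_
        show c ≤ (‖w₀ y‖₊ : ℝ≥0∞)
        rw [← enorm_eq_nnnorm, Real.enorm_eq_ofReal_abs]
        exact ENNReal.ofReal_le_ofReal hcon.le
      rw [← enorm_eq_nnnorm, Real.enorm_eq_ofReal_abs]
      refine ENNReal.ofReal_le_ofReal ((hm₀lip y).trans ?_)
      exact mul_le_mul_of_nonneg_left habs hL0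
  have hG2int : (∫⁻ y, G2f y ^ r) ^ (1/r) ≤ ENNReal.ofReal (L*δ) * Hp := by
    calc (∫⁻ y, G2f y ^ r) ^ (1/r)
        ≤ (∫⁻ y, (ENNReal.ofReal (L*δ) * Hf y) ^ r) ^ (1/r) := by
          refine ENNReal.rpow_le_rpow (lintegral_mono fun y => ?_) (by positivity)
          exact ENNReal.rpow_le_rpow (hG2le y) hr0.le
      _ = (ENNReal.ofReal (L*δ) ^ r * ∫⁻ y, Hf y ^ r) ^ (1/r) := by
          simp_rw [ENNReal.mul_rpow_of_nonneg _ _ hr0.le]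
          rw [lintegral_const_mul' _ _ (ENNReal.rpow_ne_top_of_nonneg hr0.le
            ENNReal.ofReal_ne_top)]
      _ = ENNReal.ofReal (L*δ) * Hp := by
          rw [ENNReal.mul_rpow_of_nonneg _ _ (by positivity), ← ENNReal.rpow_mul,
            mul_one_div, div_self hr0.ne', ENNReal.rpow_one, hHp]
  -- the two convolution pieces
  set P : EuclideanSpace ℝ (Fin 2) → ℝ≥0∞ := fun x => ∫⁻ y, K (x - y) * G1 y with hPdef
  set Q : EuclideanSpace ℝ (Fin 2) → ℝ≥0∞ := fun x => ∫⁻ y, K (x - y) * G2f y with hQdef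
  have hPm : Measurable P := Measurable.lintegral_prod_right
    (f := fun x y => K (x - y) * G1 y)
    ((hKm.comp (measurable_fst.sub measurable_snd)).mul (hG1m.comp measurable_snd))
  have hQm : Measurable Q := Measurable.lintegral_prod_right
    (f := fun x y => K (x - y) * G2f y)
    ((hKm.comp (measurable_fst.sub measurable_snd)).mul (hG2m.comp measurable_snd))
  have hsplit : ∀ x, ∫⁻ y, K (x - y) * Gf y = P x + Q x := by
    intro x
    rw [hPdef, hQdef]
    have hm1 : Measurable fun y : EuclideanSpace ℝ (Fin 2) => K (x - y) * G1 y :=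
      (hKm.comp (measurable_const.sub measurable_id)).mul hG1m
    rw [← lintegral_add_left hm1]
    refine lintegral_congr fun y => ?_
    rw [← mul_add]
    congr 1
    exact (congrFun (Set.indicator_self_add_compl E Gf) y).symm
  have step1 : eLpNorm (fun x => ∫ y, ω₀ (x - y) * m₀ y * h₀ y) p volume
      ≤ (∫⁻ x, (∫⁻ y, K (x - y) * Gf y) ^ r) ^ (1/r) := by
    rw [eLpNorm_eq_lintegral_rpow_enorm_toReal hp0 hptop, ← hr]
    refine ENNReal.rpow_le_rpow (lintegral_mono fun x => ?_) (by positivity)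
    refine ENNReal.rpow_le_rpow ?_ hr0.le
    calc (‖∫ y, ω₀ (x - y) * m₀ y * h₀ y‖₊ : ℝ≥0∞)
        ≤ ∫⁻ y, ‖ω₀ (x - y) * m₀ y * h₀ y‖₊ := enorm_integral_le_lintegral_enorm _
      _ = ∫⁻ y, K (x - y) * Gf y := by
          refine lintegral_congr fun y => ?_
          simp [hKdef, hGdef, hHdef, nnnorm_mul, ENNReal.coe_mul, mul_assoc]
  -- identify the Young constants
  have hKr : (∫⁻ z, K z ^ r) ^ (1/r) = Wp := by
    rw [hWpdef, show eLpNorm ω p volume = eLpNorm ω₀ p volume from eLpNorm_congr_ae hωae,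
      eLpNorm_eq_lintegral_rpow_enorm_toReal hp0 hptop, ← hr]
    rfl
  have hKI : ∫⁻ z, K z = I1 := by
    rw [hI1def]
    refine lintegral_congr_ae ?_
    filter_upwards [hωae] with z hz
    rw [hz]
  -- final assembly
  have h1 : Wp * (ENNReal.ofReal (2*C₁) * ((volume E) ^ (1/r') * Hp))
      ≤ ENNReal.ofReal (ε/2) * Hp := by
    have hμE' : (volume E) ^ (1/r') ≤ (c⁻¹ ^ r * Wn ^ r) ^ (1/r') :=
      ENNReal.rpow_le_rpow hμE (by positivity)
    calc Wp * (ENNReal.ofReal (2*C₁) * ((volume E) ^ (1/r') * Hp))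
        = (A * (volume E) ^ (1/r')) * Hp := by rw [hAdef]; ring
      _ ≤ (A * (c⁻¹ ^ r * Wn ^ r) ^ (1/r')) * Hp := by gcongr
      _ = Ψ Wn * Hp := rfl
      _ ≤ ENNReal.ofReal (ε/2) * Hp := mul_le_mul_left (hN n hn).le _
  have h2 : I1 * (ENNReal.ofReal (L*δ) * Hp) ≤ ENNReal.ofReal (ε/2) * Hp := by
    have hkey : I1 * ENNReal.ofReal (L*δ) ≤ ENNReal.ofReal (ε/2) := by
      have hIle : I1 ≤ ENNReal.ofReal (I1.toReal + 1) :=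
        le_trans (le_of_eq (ENNReal.ofReal_toReal hI1top).symm)
          (ENNReal.ofReal_le_ofReal (by linarith))
      have hLle : ENNReal.ofReal (L*δ) ≤ ENNReal.ofReal ((L+1)*δ) :=
        ENNReal.ofReal_le_ofReal (by nlinarith [hδ.le])
      calc I1 * ENNReal.ofReal (L*δ)
          ≤ ENNReal.ofReal (I1.toReal + 1) * ENNReal.ofReal ((L+1)*δ) :=
            mul_le_mul' hIle hLle
        _ = ENNReal.ofReal ((I1.toReal + 1) * ((L+1)*δ)) :=
            (ENNReal.ofReal_mul (by positivity)).symm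
        _ = ENNReal.ofReal (ε/2) := by
            congr 1
            rw [hδdef]
            field_simp
    calc I1 * (ENNReal.ofReal (L*δ) * Hp) = (I1 * ENNReal.ofReal (L*δ)) * Hp := by ring
      _ ≤ ENNReal.ofReal (ε/2) * Hp := mul_le_mul_left hkey _
  calc eLpNorm (fun x => ∫ y, ω (x - y) * (deriv f (vn n y) - deriv f (v y)) * h y) p volume
      = eLpNorm (fun x => ∫ y, ω₀ (x - y) * m₀ y * h₀ y) p volume := by rw [hFF]
    _ ≤ (∫⁻ x, (∫⁻ y, K (x - y) * Gf y) ^ r) ^ (1/r) := step1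
    _ = (∫⁻ x, (P x + Q x) ^ r) ^ (1/r) := by simp_rw [hsplit]
    _ ≤ (∫⁻ x, P x ^ r) ^ (1/r) + (∫⁻ x, Q x ^ r) ^ (1/r) :=
        ENNReal.lintegral_Lp_add_le hPm.aemeasurable hQm.aemeasurable hr1.le
    _ ≤ ((∫⁻ z, K z ^ r) * (∫⁻ y, G1 y) ^ r) ^ (1/r)
        + ((∫⁻ z, K z) ^ r * ∫⁻ y, G2f y ^ r) ^ (1/r) := by
        refine add_le_add (ENNReal.rpow_le_rpow ?_ (by positivity))
          (ENNReal.rpow_le_rpow ?_ (by positivity))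
        · exact youngB hconj K G1 hKm hG1m
        · exact youngA hconj K G2f hKm hG2m
    _ = Wp * (∫⁻ y, G1 y) + I1 * (∫⁻ y, G2f y ^ r) ^ (1/r) := by
        congr 1
        · rw [ENNReal.mul_rpow_of_nonneg _ _ (by positivity), ← ENNReal.rpow_mul,
            mul_one_div, div_self hr0.ne', ENNReal.rpow_one, hKr]
        · rw [ENNReal.mul_rpow_of_nonneg _ _ (by positivity), ← ENNReal.rpow_mul,
            mul_one_div, div_self hr0.ne', ENNReal.rpow_one, hKI]
    _ ≤ Wp * (ENNReal.ofReal (2*C₁) * ((volume E) ^ (1/r') * Hp))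
        + I1 * (ENNReal.ofReal (L*δ) * Hp) := by
        exact add_le_add (mul_le_mul_right hG1int _) (mul_le_mul_right hG2int _)
    _ ≤ ENNReal.ofReal (ε/2) * Hp + ENNReal.ofReal (ε/2) * Hp := add_le_add h1 h2
    _ = ENNReal.ofReal ε * Hp := by
        rw [← add_mul, ← ENNReal.ofReal_add (by linarith) (by linarith)]
        norm_num
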